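/- arXiv:1206.1743 — 7 statements merged into one kernel-verified Lean document; each statement's English description precedes it below -/
import Mathlib

section
/- Let γ ∈ ℝ with 0 ≤ γ ≤ 1, β = (1-γ)/2, and θ ∈ ℝ. Then the complex number g_{1A} = (γ + β e^{iθ})/(1 - β e^{-iθ}) satisfies |g_{1A}| ≤ 1. In particular the Saul'yev scheme with amplification factor g_{1A} is unconditionally stable. -/
theorem stmt_1 (γ β : ℝ) (hγ : 0 ≤ γ) (hγ1 : γ ≤ 1) (hβ : β = (1 - γ) / 2) (θ : ℝ) :
    ‖(γ + β * Complex.exp (Complex.I * θ)) /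
      (1 - β * Complex.exp (-Complex.I * θ))‖ ≤ 1 := by
  have hβ2 : β ≤ 1/2 := by rw [hβ]; linarith
  have hβ0 : 0 ≤ β := by rw [hβ]; linarith
  have hc := Real.neg_one_le_cos θ
  have hc1 := Real.cos_le_one θ
  have he1 : Complex.exp (Complex.I * θ) = Complex.cos θ + Complex.sin θ * Complex.I := by
    rw [mul_comm, Complex.exp_mul_I]
  have he2 : Complex.exp (-Complex.I * θ) = Complex.cos θ - Complex.sin θ * Complex.I := by
    have : -Complex.I * θ = (-θ : ℂ) * Complex.I := by ring
    rw [this, Complex.exp_mul_I, Complex.cos_neg, Complex.sin_neg]; ring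
  have hnum : Complex.normSq ((γ:ℂ) + β * Complex.exp (Complex.I * θ))
      = γ^2 + 2*γ*β*Real.cos θ + β^2 := by
    rw [he1]
    simp [Complex.normSq_apply, Complex.cos_ofReal_re, Complex.sin_ofReal_re,
      Complex.add_re, Complex.add_im, Complex.mul_re, Complex.mul_im]
    have := Real.sin_sq_add_cos_sq θ
    nlinarith [Real.sin_sq_add_cos_sq θ]
  have hden : Complex.normSq ((1:ℂ) - β * Complex.exp (-Complex.I * θ))
      = 1 - 2*β*Real.cos θ + β^2 := by
    rw [he2]
    simp [Complex.normSq_apply, Complex.cos_ofReal_re, Complex.sin_ofReal_re,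
      Complex.sub_re, Complex.sub_im, Complex.mul_re, Complex.mul_im]
    nlinarith [Real.sin_sq_add_cos_sq θ]
  have hle : Complex.normSq ((γ:ℂ) + β * Complex.exp (Complex.I * θ))
      ≤ Complex.normSq ((1:ℂ) - β * Complex.exp (-Complex.I * θ)) := by
    rw [hnum, hden, hβ]
    nlinarith [mul_nonneg (mul_nonneg (sub_nonneg.2 hγ1) (by linarith : (0:ℝ) ≤ 1 + γ)) (sub_nonneg.2 hc1)]
  have hdpos : 0 < Complex.normSq ((1:ℂ) - β * Complex.exp (-Complex.I * θ)) := by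
    rw [hden]; nlinarith
  have habs : 0 < ‖(1:ℂ) - β * Complex.exp (-Complex.I * θ)‖ := by
    rw [Complex.norm_def]; exact Real.sqrt_pos.2 hdpos
  rw [norm_div, div_le_one habs, Complex.norm_def, Complex.norm_def]
  exact Real.sqrt_le_sqrt hle
end

section
/- Let γ̃ ∈ [0,1], α̃ = (1+γ̃)/2, β̃ = (1-γ̃)/2, θ ∈ ℝ. Then (γ̃² + β̃² + 2β̃γ̃ cos θ)/(1 + β̃² - 2β̃ cos θ) = (1 - (4β̃γ̃/α̃²) sin²(θ/2))/(1 + (4β̃/α̃²) sin²(θ/2)), and this quantity g₂ satisfies |g₂| ≤ 1 for all θ (assuming γ̃ > 0 so α̃ > 0). -/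
theorem stmt_2 (γ α β : ℝ) (hγ0 : 0 < γ) (hγ1 : γ ≤ 1)
    (hα : α = (1 + γ) / 2) (hβ : β = (1 - γ) / 2) (θ : ℝ) :
    (γ ^ 2 + β ^ 2 + 2 * β * γ * Real.cos θ) / (1 + β ^ 2 - 2 * β * Real.cos θ)
      = (1 - (4 * β * γ / α ^ 2) * Real.sin (θ / 2) ^ 2) /
        (1 + (4 * β / α ^ 2) * Real.sin (θ / 2) ^ 2) ∧
    |(γ ^ 2 + β ^ 2 + 2 * β * γ * Real.cos θ) / (1 + β ^ 2 - 2 * β * Real.cos θ)| ≤ 1 := by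
  set s := Real.sin (θ / 2) ^ 2 with hsdef
  have hs0 : 0 ≤ s := sq_nonneg _
  have hc : Real.cos θ = 1 - 2 * s := by
    have h1 : Real.cos (2 * (θ / 2)) = 2 * Real.cos (θ / 2) ^ 2 - 1 := Real.cos_two_mul _
    have h2 := Real.sin_sq_add_cos_sq (θ / 2)
    rw [show 2 * (θ / 2) = θ by ring] at h1
    rw [hsdef]; linarith
  have hβ0 : 0 ≤ β := by rw [hβ]; linarith
  have hα0 : 0 < α := by rw [hα]; linarith
  have hα2 : (0:ℝ) < α ^ 2 := by positivity
  have hden : 1 + β ^ 2 - 2 * β * Real.cos θ = α ^ 2 + 4 * β * s := by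
    rw [hc, hα, hβ]; ring
  have hnum : γ ^ 2 + β ^ 2 + 2 * β * γ * Real.cos θ = α ^ 2 - 4 * β * γ * s := by
    rw [hc, hα, hβ]; ring
  have hD1 : 0 < 1 + β ^ 2 - 2 * β * Real.cos θ := by
    rw [hden]; positivity
  have hD2 : 0 < 1 + (4 * β / α ^ 2) * s := by positivity
  constructor
  · rw [div_eq_div_iff (ne_of_gt hD1) (ne_of_gt hD2), hnum, hden]
    field_simp
  · rw [abs_div, abs_of_pos hD1, div_le_one hD1, hnum, hden, abs_le]
    constructor <;> nlinarith [mul_nonneg hβ0 hs0]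
end

section
/- Define g₂(r, θ) = (1 - (4β̃(r)γ̃(r)/α̃(r)²) sin²(θ/2))/(1 + (4β̃(r)/α̃(r)²) sin²(θ/2)) where γ̃ : ℝ → ℝ satisfies γ̃(-r)·γ̃(r) = 1 and γ̃(r) ≠ -1, with α̃(r) = (1+γ̃(r))/2, β̃(r) = (1-γ̃(r))/2. Then g₂(-r, θ) · g₂(r, θ) = 1 for all θ where both denominators are nonzero. -/
theorem stmt_3 (γ : ℝ → ℝ) (r θ : ℝ)
    (hγ : γ (-r) * γ r = 1)
    (hγ1 : γ r ≠ -1) (hγ2 : γ (-r) ≠ -1)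
    (α β : ℝ → ℝ)
    (hα : ∀ x, α x = (1 + γ x) / 2) (hβ : ∀ x, β x = (1 - γ x) / 2)
    (g : ℝ → ℝ → ℝ)
    (hg : ∀ x t, g x t = (1 - (4 * β x * γ x / (α x) ^ 2) * Real.sin (t / 2) ^ 2) /
        (1 + (4 * β x / (α x) ^ 2) * Real.sin (t / 2) ^ 2))
    (hden1 : 1 + (4 * β r / (α r) ^ 2) * Real.sin (θ / 2) ^ 2 ≠ 0)
    (hden2 : 1 + (4 * β (-r) / (α (-r)) ^ 2) * Real.sin (θ / 2) ^ 2 ≠ 0) :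
    g (-r) θ * g r θ = 1 := by
  have h1 : 1 + γ r ≠ 0 := fun h => hγ1 (by linarith)
  have h1' : γ r + 1 ≠ 0 := fun h => hγ1 (by linarith)
  have h2 : 1 + γ (-r) ≠ 0 := fun h => hγ2 (by linarith)
  have ha0 : γ r ≠ 0 := by
    intro h; rw [h, mul_zero] at hγ; exact one_ne_zero hγ.symm
  have hb : γ (-r) = (γ r)⁻¹ := by
    field_simp; linarith [hγ]
  have hβn : β (-r) = (γ r - 1) / (2 * γ r) := by
    rw [hβ, hb]; field_simp
  have hαn : α (-r) = (γ r + 1) / (2 * γ r) := by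
    rw [hα, hb]; field_simp
  have key1 : 4 * β (-r) * γ (-r) / (α (-r)) ^ 2 = -(4 * β r / (α r) ^ 2) := by
    rw [hβn, hαn, hb, hβ, hα]; field_simp; ring
  have key2 : 4 * β (-r) / (α (-r)) ^ 2 = -γ r * (4 * β r / (α r) ^ 2) := by
    rw [hβn, hαn, hβ, hα]; field_simp; ring
  have key3 : 4 * β r * γ r / (α r) ^ 2 = γ r * (4 * β r / (α r) ^ 2) := by ring
  rw [key2] at hden2
  rw [hg, hg, key1, key2, key3, div_mul_div_comm,
    div_eq_one_iff_eq (mul_ne_zero hden2 hden1)]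
  ring
end

section
/- With γ̃ = (1 - r/2)/(1 + r/2), β̃ = (1-γ̃)/2, α̃ = (1+γ̃)/2 and r > 0, the second-order amplification factor equals g₂ = (1 - 2r(1 - r/2) sin²(θ/2))/(1 + 2r(1 + r/2) sin²(θ/2)), and its exponent h₂(θ) = -log g₂ has Taylor expansion in θ beginning h₂ = r θ² - (r/12 + r³/4) θ⁴ + O(θ⁶). In particular h₂ agrees with the exact exponent h_ex = 4r sin²(θ/2) = rθ² - (r/12)θ⁴ + ... through order θ³. -/
open Asymptotics Filter

private lemma half_ball : ∀ᶠ x : ℝ in nhds 0, |x| < 1 / 2 := by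
  have := Metric.ball_mem_nhds (0 : ℝ) (by norm_num : (0:ℝ) < 1/2)
  filter_upwards [this] with x hx
  simpa [Real.dist_eq] using hx

private lemma logAux : (fun x : ℝ => Real.log (1 + x) - (x - x ^ 2 / 2)) =O[nhds 0]
    (fun x : ℝ => x ^ 3) := by
  rw [isBigO_iff]
  refine ⟨2, ?_⟩
  filter_upwards [half_ball] with x hx
  have h1 : |(-x : ℝ)| < 1 := by rw [abs_neg]; linarith [abs_nonneg x]
  have h := Real.abs_log_sub_add_sum_range_le h1 2
  simp only [Finset.sum_range_succ, Finset.sum_range_zero] at h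
  push_cast at h
  norm_num at h
  have heq : |Real.log (1 + x) - (x - x ^ 2 / 2)| = |-x + x ^ 2 / 2 + Real.log (1 + x)| := by
    congr 1; ring
  rw [Real.norm_eq_abs, Real.norm_eq_abs, heq]
  refine h.trans ?_
  have hd : (1:ℝ)/2 ≤ 1 - |x| := by linarith
  have h2 : |x| ^ 3 / (1 - |x|) ≤ |x| ^ 3 / (1/2) :=
    div_le_div_of_nonneg_left (by positivity) (by norm_num) hd
  refine h2.trans ?_
  rw [abs_pow]
  linarith [pow_nonneg (abs_nonneg x) 3]

private lemma cosAux : (fun θ : ℝ => Real.cos θ - (1 - θ ^ 2 / 2 + θ ^ 4 / 24)) =O[nhds 0]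
    (fun θ : ℝ => θ ^ 6) := by
  rw [isBigO_iff]
  refine ⟨1, ?_⟩
  have hball : ∀ᶠ x : ℝ in nhds 0, |x| ≤ 1 := by
    have := Metric.ball_mem_nhds (0 : ℝ) (by norm_num : (0:ℝ) < 1)
    filter_upwards [this] with x hx
    rw [Metric.mem_ball, Real.dist_eq, sub_zero] at hx
    exact hx.le
  filter_upwards [hball] with θ hθ
  have hA : ‖(θ:ℂ) * Complex.I‖ = |θ| := by
    rw [norm_mul, Complex.norm_I, mul_one, Complex.norm_real, Real.norm_eq_abs]
  have habs1 : ‖(θ : ℂ) * Complex.I‖ ≤ 1 := by rw [hA]; exact hθ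
  have habs2 : ‖-((θ : ℂ) * Complex.I)‖ ≤ 1 := by
    rwa [norm_neg]
  have hb1 := Complex.exp_bound habs1 (n := 6) (by norm_num)
  have hb2 := Complex.exp_bound habs2 (n := 6) (by norm_num)
  have hsum : (∑ m ∈ Finset.range 6, ((θ:ℂ) * Complex.I) ^ m / m.factorial)
      + (∑ m ∈ Finset.range 6, (-((θ:ℂ) * Complex.I)) ^ m / m.factorial)
      = 2 * (1 - (θ:ℂ) ^ 2 / 2 + (θ:ℂ) ^ 4 / 24) := by
    simp only [Finset.sum_range_succ, Finset.sum_range_zero]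
    norm_num [Nat.factorial]
    ring_nf
    simp [Complex.I_sq]
    ring
  have hcos : (Complex.cos θ) - (1 - (θ:ℂ) ^ 2 / 2 + (θ:ℂ) ^ 4 / 24)
      = ((Complex.exp ((θ:ℂ) * Complex.I) - ∑ m ∈ Finset.range 6, ((θ:ℂ) * Complex.I) ^ m / m.factorial)
        + (Complex.exp (-((θ:ℂ) * Complex.I)) - ∑ m ∈ Finset.range 6, (-((θ:ℂ) * Complex.I)) ^ m / m.factorial)) / 2 := by
    have harg : Complex.exp (-(θ:ℂ) * Complex.I) = Complex.exp (-((θ:ℂ) * Complex.I)) := by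
      ring_nf
    rw [Complex.cos, harg, eq_div_iff (by norm_num : (2:ℂ) ≠ 0)]
    linear_combination hsum
  have hre : Real.cos θ - (1 - θ ^ 2 / 2 + θ ^ 4 / 24)
      = ((Complex.cos θ) - (1 - (θ:ℂ) ^ 2 / 2 + (θ:ℂ) ^ 4 / 24)).re := by
    simp [← Complex.ofReal_pow, Complex.cos_ofReal_re]
  rw [Real.norm_eq_abs, Real.norm_eq_abs, hre]
  refine (Complex.abs_re_le_norm _).trans ?_
  rw [hcos]
  calc ‖_‖ ≤ (‖Complex.exp ((θ:ℂ) * Complex.I) - ∑ m ∈ Finset.range 6, ((θ:ℂ) * Complex.I) ^ m / m.factorial‖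
        + ‖Complex.exp (-((θ:ℂ) * Complex.I)) - ∑ m ∈ Finset.range 6, (-((θ:ℂ) * Complex.I)) ^ m / m.factorial‖) / 2 := by
        rw [norm_div]
        simp only [Complex.norm_ofNat]
        gcongr
        exact norm_add_le _ _
    _ ≤ (|θ| ^ 6 * (7 * ((720:ℝ) * 6)⁻¹) + |θ| ^ 6 * (7 * ((720:ℝ) * 6)⁻¹)) / 2 := by
        gcongr
        · calc _ ≤ ‖(θ:ℂ)*Complex.I‖ ^ 6 * ((6+1 : ℕ) * ((Nat.factorial 6 : ℝ) * 6)⁻¹) := hb1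
            _ = |θ| ^ 6 * (7 * ((720:ℝ) * 6)⁻¹) := by rw [hA]; norm_num [Nat.factorial]
        · calc _ ≤ ‖-((θ:ℂ)*Complex.I)‖ ^ 6 * ((6+1 : ℕ) * ((Nat.factorial 6 : ℝ) * 6)⁻¹) := hb2
            _ = |θ| ^ 6 * (7 * ((720:ℝ) * 6)⁻¹) := by rw [norm_neg, hA]; norm_num [Nat.factorial]
    _ ≤ 1 * |θ ^ 6| := by
        rw [abs_pow, one_mul]
        have : (0:ℝ) ≤ |θ| ^ 6 := by positivity
        nlinarith

private lemma pow_bigO_pow {m n : ℕ} (h : m ≤ n) :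
    (fun θ : ℝ => θ ^ n) =O[nhds 0] (fun θ : ℝ => θ ^ m) := by
  rw [isBigO_iff]
  refine ⟨1, ?_⟩
  have hball : ∀ᶠ x : ℝ in nhds 0, |x| ≤ 1 := by
    have := Metric.ball_mem_nhds (0 : ℝ) (by norm_num : (0:ℝ) < 1)
    filter_upwards [this] with x hx
    rw [Metric.mem_ball, Real.dist_eq, sub_zero] at hx
    exact hx.le
  filter_upwards [hball] with θ hθ
  rw [Real.norm_eq_abs, Real.norm_eq_abs, abs_pow, abs_pow, one_mul]
  exact pow_le_pow_of_le_one (abs_nonneg θ) hθ h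

private lemma sinSqAux :
    (fun θ : ℝ => Real.sin (θ / 2) ^ 2 - (θ ^ 2 / 4 - θ ^ 4 / 48)) =O[nhds 0]
    (fun θ : ℝ => θ ^ 6) := by
  have hfe : (fun θ : ℝ => Real.sin (θ / 2) ^ 2 - (θ ^ 2 / 4 - θ ^ 4 / 48))
      = fun θ : ℝ => (-(1:ℝ)/2) * (Real.cos θ - (1 - θ ^ 2 / 2 + θ ^ 4 / 24)) := by
    funext θ
    have h2 : (2:ℝ) * (θ / 2) = θ := by ring
    rw [Real.sin_sq_eq_half_sub, h2]; ring
  rw [hfe]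
  exact cosAux.const_mul_left _

private lemma sin_half_sq_le (θ : ℝ) : Real.sin (θ / 2) ^ 2 ≤ θ ^ 2 / 4 := by
  calc Real.sin (θ / 2) ^ 2 = |Real.sin (θ / 2)| ^ 2 := (sq_abs _).symm
    _ ≤ |θ / 2| ^ 2 := pow_le_pow_left₀ (abs_nonneg _) Real.abs_sin_le_abs 2
    _ = θ ^ 2 / 4 := by rw [sq_abs]; ring

private lemma sinSqAux2 :
    (fun θ : ℝ => Real.sin (θ / 2) ^ 2 - θ ^ 2 / 4) =O[nhds 0]
    (fun θ : ℝ => θ ^ 4) := by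
  have hfe : (fun θ : ℝ => Real.sin (θ / 2) ^ 2 - θ ^ 2 / 4)
      = fun θ : ℝ => (Real.sin (θ / 2) ^ 2 - (θ ^ 2 / 4 - θ ^ 4 / 48))
          + (-(1:ℝ)/48) * θ ^ 4 := by
    funext θ; ring
  rw [hfe]
  exact (sinSqAux.trans (pow_bigO_pow (by norm_num))).add
    ((isBigO_refl (fun θ : ℝ => θ ^ 4) _).const_mul_left _)

private lemma sinSqPlus :
    (fun θ : ℝ => Real.sin (θ / 2) ^ 2 + θ ^ 2 / 4) =O[nhds 0]
    (fun θ : ℝ => θ ^ 2) := by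
  rw [isBigO_iff]
  refine ⟨1, ?_⟩
  filter_upwards with θ
  rw [Real.norm_eq_abs, Real.norm_eq_abs, one_mul]
  have h1 := sin_half_sq_le θ
  have h2 : (0:ℝ) ≤ Real.sin (θ / 2) ^ 2 := sq_nonneg _
  have h3 : (0:ℝ) ≤ θ ^ 2 := sq_nonneg _
  rw [abs_of_nonneg (by linarith), abs_of_nonneg h3]
  linarith

private lemma tendsto_c_sin (c : ℝ) :
    Tendsto (fun θ : ℝ => c * Real.sin (θ / 2) ^ 2) (nhds 0) (nhds 0) := by
  have hc : Continuous fun θ : ℝ => c * Real.sin (θ / 2) ^ 2 := by fun_prop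
  have h0 : c * Real.sin ((0:ℝ) / 2) ^ 2 = 0 := by simp
  simpa [h0] using hc.tendsto 0

private lemma Ecomp (c : ℝ) :
    (fun θ : ℝ => Real.log (1 + c * Real.sin (θ / 2) ^ 2)
      - (c * Real.sin (θ / 2) ^ 2 - (c * Real.sin (θ / 2) ^ 2) ^ 2 / 2)) =O[nhds 0]
    (fun θ : ℝ => θ ^ 6) := by
  have h1 := logAux.comp_tendsto (tendsto_c_sin c)
  refine IsBigO.trans (by exact h1) ?_
  rw [isBigO_iff]
  refine ⟨|c| ^ 3, ?_⟩
  filter_upwards with θ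
  have h0 : (0:ℝ) ≤ Real.sin (θ / 2) ^ 2 := sq_nonneg _
  have hle := sin_half_sq_le θ
  show ‖(c * Real.sin (θ / 2) ^ 2) ^ 3‖ ≤ |c| ^ 3 * ‖θ ^ 6‖
  rw [Real.norm_eq_abs, Real.norm_eq_abs, abs_pow, abs_mul, abs_pow, mul_pow, abs_pow]
  gcongr
  calc (|Real.sin (θ / 2)| ^ 2) ^ 3 = (Real.sin (θ / 2) ^ 2) ^ 3 := by rw [sq_abs]
    _ ≤ (θ ^ 2 / 4) ^ 3 := by gcongr
    _ ≤ |θ| ^ 6 := by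
        rw [show ((6:ℕ)) = 2 * 3 from rfl, pow_mul, sq_abs]
        nlinarith [sq_nonneg θ, pow_nonneg (sq_nonneg θ) 3]

theorem stmt_5 (r : ℝ) (hr : 0 < r)
    (γ α β : ℝ) (hγ : γ = (1 - r / 2) / (1 + r / 2))
    (hα : α = (1 + γ) / 2) (hβ : β = (1 - γ) / 2)
    (g₂ : ℝ → ℝ)
    (hg₂ : ∀ θ, g₂ θ = (1 - (4 * β * γ / α ^ 2) * Real.sin (θ / 2) ^ 2) /
        (1 + (4 * β / α ^ 2) * Real.sin (θ / 2) ^ 2)) :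
    (∀ θ : ℝ, g₂ θ = (1 - 2 * r * (1 - r / 2) * Real.sin (θ / 2) ^ 2) /
        (1 + 2 * r * (1 + r / 2) * Real.sin (θ / 2) ^ 2)) ∧
    (fun θ : ℝ => -Real.log (g₂ θ) - (r * θ ^ 2 - (r / 12 + r ^ 3 / 4) * θ ^ 4))
      =O[nhds 0] (fun θ : ℝ => θ ^ 6) ∧
    (fun θ : ℝ => -Real.log (g₂ θ) - 4 * r * Real.sin (θ / 2) ^ 2)
      =O[nhds 0] (fun θ : ℝ => θ ^ 4) := by
  have hne : (1:ℝ) + r / 2 ≠ 0 := by positivity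
  have hA : 4 * β * γ / α ^ 2 = 2 * r * (1 - r / 2) := by
    rw [hβ, hα, hγ]; field_simp; ring
  have hB : 4 * β / α ^ 2 = 2 * r * (1 + r / 2) := by
    rw [hβ, hα, hγ]; field_simp; ring
  have hg : ∀ θ, g₂ θ = (1 - 2 * r * (1 - r / 2) * Real.sin (θ / 2) ^ 2) /
      (1 + 2 * r * (1 + r / 2) * Real.sin (θ / 2) ^ 2) := fun θ => by
    rw [hg₂ θ, hA, hB]
  obtain ⟨a, ha⟩ : ∃ a : ℝ, a = 2 * r * (1 - r / 2) := ⟨_, rfl⟩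
  obtain ⟨b, hb⟩ : ∃ b : ℝ, b = 2 * r * (1 + r / 2) := ⟨_, rfl⟩
  have hg' : ∀ θ, g₂ θ = (1 - a * Real.sin (θ / 2) ^ 2) /
      (1 + b * Real.sin (θ / 2) ^ 2) := fun θ => by rw [hg θ, ← ha, ← hb]
  have hkey : ∀ᶠ θ : ℝ in nhds 0, -Real.log (g₂ θ) =
      (Real.log (1 + b * Real.sin (θ / 2) ^ 2)
        - (b * Real.sin (θ / 2) ^ 2 - (b * Real.sin (θ / 2) ^ 2) ^ 2 / 2))
      - (Real.log (1 + (-a) * Real.sin (θ / 2) ^ 2)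
        - ((-a) * Real.sin (θ / 2) ^ 2 - ((-a) * Real.sin (θ / 2) ^ 2) ^ 2 / 2))
      + 4 * r * Real.sin (θ / 2) ^ 2 - 4 * r ^ 3 * (Real.sin (θ / 2) ^ 2) ^ 2 := by
    filter_upwards [(tendsto_c_sin a).eventually half_ball,
      (tendsto_c_sin b).eventually half_ball] with θ h1 h2
    have h1' := abs_lt.1 h1
    have h2' := abs_lt.1 h2
    have hnum : (0:ℝ) < 1 - a * Real.sin (θ / 2) ^ 2 := by linarith [h1'.2]
    have hden : (0:ℝ) < 1 + b * Real.sin (θ / 2) ^ 2 := by linarith [h2'.1]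
    rw [hg' θ, Real.log_div (ne_of_gt hnum) (ne_of_gt hden)]
    have hrw : 1 + (-a) * Real.sin (θ / 2) ^ 2 = 1 - a * Real.sin (θ / 2) ^ 2 := by ring
    rw [hrw, ha, hb]
    ring
  refine ⟨hg, ?_, ?_⟩
  · have hmul : (fun θ : ℝ => (Real.sin (θ / 2) ^ 2 - θ ^ 2 / 4)
        * (Real.sin (θ / 2) ^ 2 + θ ^ 2 / 4)) =O[nhds 0] (fun θ : ℝ => θ ^ 6) := by
      have h := sinSqAux2.mul sinSqPlus
      have heq : (fun x : ℝ => x ^ 4 * x ^ 2) = fun x : ℝ => x ^ 6 := by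
        funext x; ring
      rwa [heq] at h
    have hbig := (((Ecomp b).sub (Ecomp (-a))).add
        (sinSqAux.const_mul_left (4 * r))).sub (hmul.const_mul_left (4 * r ^ 3))
    refine hbig.congr' ?_ EventuallyEq.rfl
    filter_upwards [hkey] with θ hk
    rw [hk, ha, hb]
    ring
  · have hs4 : (fun θ : ℝ => (Real.sin (θ / 2) ^ 2) ^ 2) =O[nhds 0]
        (fun θ : ℝ => θ ^ 4) := by
      rw [isBigO_iff]
      refine ⟨1, ?_⟩
      filter_upwards with θ
      rw [Real.norm_eq_abs, Real.norm_eq_abs, one_mul, abs_pow]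
      have h0 : (0:ℝ) ≤ Real.sin (θ / 2) ^ 2 := sq_nonneg _
      have hle := sin_half_sq_le θ
      rw [abs_of_nonneg (by positivity : (0:ℝ) ≤ θ ^ 4), abs_of_nonneg h0]
      nlinarith [mul_le_mul hle hle h0 (show (0:ℝ) ≤ θ ^ 2 / 4 by positivity),
        sq_nonneg (θ ^ 2)]
    have hbig := (((Ecomp b).trans (pow_bigO_pow (by norm_num))).sub
        ((Ecomp (-a)).trans (pow_bigO_pow (by norm_num)))).sub
        (hs4.const_mul_left (4 * r ^ 3))
    refine hbig.congr' ?_ EventuallyEq.rfl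
    filter_upwards [hkey] with θ hk
    rw [hk, ha, hb]
    ring
end

section
/- For η > 0, set s̃ = (2/η)(√(1 + η²/4) − 1). Then 0 < s̃ < 1, and 2s̃/(1 − s̃²) = η/2. Consequently the second-order amplification factor g₂ = (1 − i·2(s̃/c̃²) sin θ)/(1 + i·2(s̃/c̃²) sin θ) with c̃² = 1 − s̃² equals the Crank–Nicolson factor (1 − i(η/2) sin θ)/(1 + i(η/2) sin θ), and |g₂| = 1 for all θ. -/
theorem stmt_9 (η : ℝ) (hη : 0 < η)
    (s : ℝ) (hs : s = (2 / η) * (Real.sqrt (1 + η ^ 2 / 4) - 1)) :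
    (0 < s ∧ s < 1) ∧
    2 * s / (1 - s ^ 2) = η / 2 ∧
    (∀ θ : ℝ,
      (1 - Complex.I * (2 * (s / (1 - s ^ 2))) * Real.sin θ) /
        (1 + Complex.I * (2 * (s / (1 - s ^ 2))) * Real.sin θ)
      = (1 - Complex.I * (η / 2) * Real.sin θ) /
        (1 + Complex.I * (η / 2) * Real.sin θ) ∧
      ‖(1 - Complex.I * (2 * (s / (1 - s ^ 2))) * Real.sin θ) /
        (1 + Complex.I * (2 * (s / (1 - s ^ 2))) * Real.sin θ)‖ = 1) := by
  set r := Real.sqrt (1 + η ^ 2 / 4) with hr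
  have hr0 : 0 ≤ 1 + η ^ 2 / 4 := by positivity
  have hr2 : r ^ 2 = 1 + η ^ 2 / 4 := Real.sq_sqrt hr0
  have hrpos : 0 ≤ r := Real.sqrt_nonneg _
  have hr1 : 1 < r := by nlinarith
  have hspos : 0 < s := by
    rw [hs]
    exact mul_pos (by positivity) (by linarith)
  have hs1 : s < 1 := by
    rw [hs]
    rw [div_mul_eq_mul_div, div_lt_one hη]
    nlinarith
  have hkey : 1 - s ^ 2 = 4 * s / η := by
    rw [hs]
    field_simp
    nlinarith
  have hne : (1 : ℝ) - s ^ 2 ≠ 0 := by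
    rw [hkey]; positivity
  have hmain : 2 * s / (1 - s ^ 2) = η / 2 := by
    rw [hkey]
    field_simp
    ring
  refine ⟨⟨hspos, hs1⟩, hmain, fun θ => ?_⟩
  have h2 : 2 * (s / (1 - s ^ 2)) = η / 2 := by
    rw [mul_div_assoc] at hmain; exact hmain
  have h2c : (2 : ℂ) * ((s : ℂ) / (1 - (s : ℂ) ^ 2)) = (η : ℂ) / 2 := by
    have := congrArg (Complex.ofReal) h2
    push_cast at this
    exact this
  rw [h2c]
  refine ⟨rfl, ?_⟩
  have hden : (1 + Complex.I * ((η : ℂ) / 2) * (Real.sin θ : ℂ)) ≠ 0 := by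
    intro h
    have := congrArg Complex.re h
    simp [Complex.add_re, Complex.mul_re, Complex.I_re, Complex.I_im] at this
  rw [norm_div, div_eq_one_iff_eq (norm_ne_zero_iff.mpr hden)]
  have : (1 - Complex.I * ((η : ℂ) / 2) * (Real.sin θ : ℂ)) =
      starRingEnd ℂ (1 + Complex.I * ((η : ℂ) / 2) * (Real.sin θ : ℂ)) := by
    simp only [map_add, map_one, map_mul, Complex.conj_I, Complex.conj_ofReal,
      map_div₀, map_ofNat]
    ring
  rw [this, Complex.norm_conj]
end

section
/- Let γ ∈ (0,1], β, λ ∈ ℝ with β + γ + λ = 1, and suppose |β| < 1. Define h_{1A}(θ) by g_{1A} = (γ + λe^{iθ})/(1 − βe^{-iθ}) = e^{-h_{1A}}. Then the first-order Taylor coefficients of h_{1A} at θ = 0 are: coefficient of iθ equals (2β − (1−γ))/(1−β), and the coefficient of θ² equals (1−γ)(β+γ)/(2(1−β)²). -/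
open Asymptotics Filter

lemma step_O {f f' : ℝ → ℂ} {k : ℕ} (hd : ∀ θ : ℝ, HasDerivAt f (f' θ) θ)
    (h0 : f 0 = 0) (hO : f' =O[nhds 0] fun θ : ℝ => θ ^ k) :
    f =O[nhds 0] fun θ : ℝ => θ ^ (k + 1) := by
  obtain ⟨C, hC⟩ := hO.bound
  rw [Metric.eventually_nhds_iff] at hC
  obtain ⟨ε, hε, hball⟩ := hC
  have hC0 : 0 ≤ C := by
    by_contra hneg
    push_neg at hneg
    have h1 := hball (y := ε/2)
      (by rw [dist_zero_right, Real.norm_eq_abs, abs_of_pos (by linarith)]; linarith)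
    have hpos : (0:ℝ) < (ε/2) ^ k := by positivity
    rw [Real.norm_eq_abs, abs_of_pos hpos] at h1
    nlinarith [norm_nonneg (f' (ε/2))]
  rw [Asymptotics.isBigO_iff]
  refine ⟨C, ?_⟩
  rw [Metric.eventually_nhds_iff]
  refine ⟨ε, hε, fun θ hθ => ?_⟩
  simp only [dist_zero_right, Real.norm_eq_abs] at hθ hball ⊢
  have key : ‖f θ - f 0‖ ≤ (C * |θ| ^ k) * ‖θ - 0‖ := by
    apply Convex.norm_image_sub_le_of_norm_hasDerivWithin_le
      (f' := f') (s := Set.uIcc 0 θ)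
      (fun t _ => (hd t).hasDerivWithinAt)
      (fun t ht => ?_) (convex_uIcc _ _) (Set.left_mem_uIcc) (Set.right_mem_uIcc)
    have htθ : |t| ≤ |θ| := by
      rcases Set.mem_uIcc.1 ht with h | h <;> cases abs_cases θ <;> cases abs_cases t <;> linarith
    calc ‖f' t‖ ≤ C * ‖t ^ k‖ := hball (by simpa using lt_of_le_of_lt htθ hθ)
      _ ≤ C * |θ| ^ k := by
          rw [norm_pow, Real.norm_eq_abs]
          exact mul_le_mul_of_nonneg_left (pow_le_pow_left₀ (abs_nonneg _) htθ k) hC0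
  rw [h0, sub_zero, sub_zero, Real.norm_eq_abs] at key
  calc ‖f θ‖ ≤ C * |θ| ^ k * |θ| := key
    _ = C * |θ ^ (k+1)| := by rw [abs_pow]; ring

set_option maxHeartbeats 1000000 in
theorem stmt_16 (γ β lam : ℝ) (hγ0 : 0 < γ) (hγ1 : γ ≤ 1)
    (hnorm : β + γ + lam = 1) (hβ : |β| < 1) :
    (fun θ : ℝ =>
        -Complex.log ((γ + lam * Complex.exp (Complex.I * θ)) /
            (1 - β * Complex.exp (-Complex.I * θ)))
          - (((2 * β - (1 - γ)) / (1 - β) : ℝ) * Complex.I * θ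
             + ((1 - γ) * (β + γ) / (2 * (1 - β) ^ 2) : ℝ) * θ ^ 2))
      =O[nhds 0] (fun θ : ℝ => θ ^ 3) := by
  have hβ' := abs_lt.mp hβ
  have hβpos : (0:ℝ) < 1 - β := by linarith [hβ'.2]
  have hβ1 : (1:ℝ) - β ≠ 0 := ne_of_gt hβpos
  have hlam' : lam = 1 - β - γ := by linarith
  obtain ⟨a, ha_def⟩ : ∃ x : ℝ, x = (2 * β - (1 - γ)) / (1 - β) := ⟨_, rfl⟩
  obtain ⟨b, hb_def⟩ : ∃ x : ℝ, x = (1 - γ) * (β + γ) / (2 * (1 - β) ^ 2) := ⟨_, rfl⟩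
  -- real identities
  have haR : lam + (γ + lam) * a - β = 0 := by
    rw [hlam', ha_def]; field_simp; ring
  have hbR : -lam - 2*lam*a + (γ+lam)*(2*b) - (γ+lam)*a^2 - β = 0 := by
    rw [hlam', ha_def, hb_def]; field_simp; ring
  have haC : ((lam:ℂ) + ((γ:ℂ) + lam) * a - β) = 0 := by
    have := congrArg (fun x : ℝ => (x:ℂ)) haR; push_cast at this; exact this
  have hbC : (-(lam:ℂ) - 2*lam*a + ((γ:ℂ)+lam)*(2*b) - ((γ:ℂ)+lam)*a^2 - β) = 0 := by
    have := congrArg (fun x : ℝ => (x:ℂ)) hbR; push_cast at this; exact this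
  -- complex functions
  obtain ⟨N, hNdef⟩ : ∃ f : ℝ → ℂ, f = fun θ : ℝ => (γ:ℂ) + (lam:ℂ) * Complex.exp (Complex.I * θ) := ⟨_, rfl⟩
  obtain ⟨D, hDdef⟩ : ∃ f : ℝ → ℂ, f = fun θ : ℝ => 1 - (β:ℂ) * Complex.exp (-Complex.I * θ) := ⟨_, rfl⟩
  obtain ⟨P, hPdef⟩ : ∃ f : ℝ → ℂ, f = fun θ : ℝ => (a:ℂ) * Complex.I * θ + (b:ℂ) * (θ:ℂ)^2 := ⟨_, rfl⟩
  obtain ⟨Q, hQdef⟩ : ∃ f : ℝ → ℂ, f = fun θ : ℝ => Complex.exp (P θ) := ⟨_, rfl⟩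
  obtain ⟨M, hMdef⟩ : ∃ f : ℝ → ℂ, f = fun θ : ℝ => N θ * Q θ - D θ := ⟨_, rfl⟩
  obtain ⟨M1, hM1def⟩ : ∃ f : ℝ → ℂ, f = fun θ : ℝ =>
      (lam:ℂ) * Complex.I * Complex.exp (Complex.I * θ) * Q θ
        + N θ * (Q θ * ((a:ℂ) * Complex.I + 2 * b * θ))
        - (β:ℂ) * Complex.I * Complex.exp (-Complex.I * θ) := ⟨_, rfl⟩
  obtain ⟨M2, hM2def⟩ : ∃ f : ℝ → ℂ, f = fun θ : ℝ =>
      (lam:ℂ) * Complex.I * (Complex.I * Complex.exp (Complex.I * θ)) * Q θ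
        + (lam:ℂ) * Complex.I * Complex.exp (Complex.I * θ) * (Q θ * ((a:ℂ) * Complex.I + 2 * b * θ))
        + ((lam:ℂ) * Complex.I * Complex.exp (Complex.I * θ) * (Q θ * ((a:ℂ) * Complex.I + 2 * b * θ))
            + N θ * (Q θ * ((a:ℂ) * Complex.I + 2 * b * θ) * ((a:ℂ) * Complex.I + 2 * b * θ)
                + Q θ * (2 * (b:ℂ) * 1)))
        - (β:ℂ) * Complex.I * (-Complex.I * Complex.exp (-Complex.I * θ)) := ⟨_, rfl⟩
  -- basic derivative facts
  have hcoe : ∀ θ : ℝ, HasDerivAt (fun t : ℝ => (t:ℂ)) 1 θ := fun θ => by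
    exact Complex.ofRealCLM.hasDerivAt
  have hE1 : ∀ θ : ℝ, HasDerivAt (fun t : ℝ => Complex.exp (Complex.I * t))
      (Complex.I * Complex.exp (Complex.I * θ)) θ := fun θ => by
    have h := ((hcoe θ).const_mul Complex.I).cexp
    convert h using 1; ring
  have hE2 : ∀ θ : ℝ, HasDerivAt (fun t : ℝ => Complex.exp (-Complex.I * t))
      (-Complex.I * Complex.exp (-Complex.I * θ)) θ := fun θ => by
    have h := ((hcoe θ).const_mul (-Complex.I)).cexp
    convert h using 1; ring
  have hP' : ∀ θ : ℝ, HasDerivAt P ((a:ℂ) * Complex.I + 2 * b * θ) θ := fun θ => by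
    rw [hPdef]
    have h2 : HasDerivAt (fun t : ℝ => (b:ℂ) * (t:ℂ)^2) ((b:ℂ) * (1 * (θ:ℂ) + (θ:ℂ) * 1)) θ := by
      have h := ((hcoe θ).mul (hcoe θ)).const_mul (b:ℂ)
      simp only [pow_two]
      exact h
    have h := ((hcoe θ).const_mul ((a:ℂ) * Complex.I)).add h2
    convert h using 1; rfl; rfl; push_cast; ring
  have hQ' : ∀ θ : ℝ, HasDerivAt Q (Q θ * ((a:ℂ) * Complex.I + 2 * b * θ)) θ := fun θ => by
    rw [hQdef]
    exact (hP' θ).cexp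
  have hN' : ∀ θ : ℝ, HasDerivAt N ((lam:ℂ) * Complex.I * Complex.exp (Complex.I * θ)) θ := fun θ => by
    rw [hNdef]
    have h := ((hE1 θ).const_mul (lam:ℂ)).const_add (γ:ℂ)
    convert h using 1; rfl; ring
  have hD' : ∀ θ : ℝ, HasDerivAt D ((β:ℂ) * Complex.I * Complex.exp (-Complex.I * θ)) θ := fun θ => by
    rw [hDdef]
    have h := HasDerivAt.const_sub 1 ((hE2 θ).const_mul (β:ℂ))
    convert h using 1; rfl; ring
  have hM' : ∀ θ : ℝ, HasDerivAt M (M1 θ) θ := fun θ => by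
    rw [hMdef, hM1def]
    exact ((hN' θ).mul (hQ' θ)).sub (hD' θ)
  have hM1' : ∀ θ : ℝ, HasDerivAt M1 (M2 θ) θ := fun θ => by
    rw [hM1def, hM2def]
    have hA := (hE1 θ).const_mul ((lam:ℂ) * Complex.I)
    have hP1 := HasDerivAt.const_add ((a:ℂ) * Complex.I) ((hcoe θ).const_mul (2 * (b:ℂ)))
    have hD1 := (hE2 θ).const_mul ((β:ℂ) * Complex.I)
    exact ((hA.mul (hQ' θ)).add ((hN' θ).mul ((hQ' θ).mul hP1))).sub hD1
  -- values at 0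
  have hexp0 : ∀ c : ℂ, Complex.exp (c * ((0:ℝ):ℂ)) = 1 := fun c => by
    norm_num [Complex.exp_zero]
  have hP0 : P 0 = 0 := by rw [hPdef]; norm_num
  have hQ0 : Q 0 = 1 := by simp only [hQdef]; rw [hP0, Complex.exp_zero]
  have hN0 : N 0 = (γ:ℂ) + lam := by rw [hNdef]; norm_num [hexp0]
  have hD0 : D 0 = 1 - (β:ℂ) := by rw [hDdef]; norm_num [hexp0]
  have hM0 : M 0 = 0 := by
    rw [hMdef]; simp only [hN0, hD0, hQ0]
    rw [hlam']; push_cast; ring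
  have hM10 : M1 0 = 0 := by
    rw [hM1def]; simp only [hN0, hQ0, hexp0, Complex.ofReal_zero, mul_zero, zero_mul, add_zero, zero_add,
      mul_one, one_mul, Complex.exp_zero]
    linear_combination Complex.I * haC
  have hM20 : M2 0 = 0 := by
    rw [hM2def]; simp only [hN0, hQ0, hexp0, Complex.ofReal_zero, mul_zero, zero_mul, add_zero, zero_add,
      mul_one, one_mul, Complex.exp_zero]
    linear_combination hbC + ((lam:ℂ) + 2*(lam:ℂ)*(a:ℂ) + ((γ:ℂ)+(lam:ℂ))*(a:ℂ)^2 + (β:ℂ)) *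
      Complex.I_sq
  -- M2 is O(θ)
  have hM2diff : DifferentiableAt ℝ M2 0 := by
    rw [hM2def]
    have dE1 := (hE1 0).differentiableAt
    have dE2 := (hE2 0).differentiableAt
    have dQ := (hQ' 0).differentiableAt
    have dN := (hN' 0).differentiableAt
    have dP1 := (HasDerivAt.const_add ((a:ℂ) * Complex.I)
      ((hcoe 0).const_mul (2 * (b:ℂ)))).differentiableAt
    have dA1 := ((dE1.const_mul Complex.I).const_mul ((lam:ℂ) * Complex.I)).mul dQ
    have dA2 := (dE1.const_mul ((lam:ℂ) * Complex.I)).mul (dQ.mul dP1)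
    have dB := ((dQ.mul dP1).mul dP1).add (dQ.mul_const (2 * (b:ℂ) * 1))
    have dC := (dE2.const_mul (-Complex.I)).const_mul ((β:ℂ) * Complex.I)
    exact ((dA1.add dA2).add (dA2.add (dN.mul dB))).sub dC
  have hM2O : M2 =O[nhds 0] fun θ : ℝ => θ ^ 1 := by
    have h := hM2diff.hasDerivAt.isBigO_sub
    simp only [hM20, sub_zero] at h
    simpa [pow_one] using h
  have hM1O : M1 =O[nhds 0] fun θ : ℝ => θ ^ 2 := by
    simpa using step_O hM1' hM10 hM2O
  have hMO : M =O[nhds 0] fun θ : ℝ => θ ^ 3 := by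
    simpa using step_O hM' hM0 hM1O
  -- continuity / limits
  have hD0ne : (1 - (β:ℂ)) ≠ 0 := by
    rw [show (1 - (β:ℂ)) = ((1 - β : ℝ):ℂ) by push_cast; ring]
    exact Complex.ofReal_ne_zero.mpr hβ1
  have hN0ne : ((γ:ℂ) + lam) ≠ 0 := by
    rw [show ((γ:ℂ) + lam) = ((γ + lam : ℝ):ℂ) by push_cast; ring]
    refine Complex.ofReal_ne_zero.mpr ?_
    rw [hlam']; intro h; apply hβ1; linarith
  have hNt : Tendsto N (nhds 0) (nhds ((γ:ℂ) + lam)) := by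
    have hc : Continuous N := by
      rw [hNdef]
      exact continuous_const.add (continuous_const.mul
        (Complex.continuous_exp.comp (continuous_const.mul Complex.continuous_ofReal)))
    have := hc.tendsto 0; rwa [hN0] at this
  have hDt : Tendsto D (nhds 0) (nhds (1 - (β:ℂ))) := by
    have hc : Continuous D := by
      rw [hDdef]
      exact continuous_const.sub (continuous_const.mul
        (Complex.continuous_exp.comp (continuous_const.mul Complex.continuous_ofReal)))
    have := hc.tendsto 0; rwa [hD0] at this
  have hPt : Tendsto P (nhds 0) (nhds 0) := by
    have hc : Continuous P := by
      rw [hPdef]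
      exact ((continuous_const.mul Complex.continuous_ofReal).add
        (continuous_const.mul (Complex.continuous_ofReal.pow 2)))
    have := hc.tendsto 0; rwa [hP0] at this
  obtain ⟨g, hgdef⟩ : ∃ f : ℝ → ℂ, f = fun θ : ℝ => N θ / D θ := ⟨_, rfl⟩
  have hgt : Tendsto g (nhds 0) (nhds 1) := by
    rw [hgdef]
    have h := hNt.div hDt hD0ne
    have hval : ((γ:ℂ) + lam) / (1 - (β:ℂ)) = 1 := by
      rw [div_eq_one_iff_eq hD0ne, hlam']; push_cast; ring
    rwa [hval] at h
  have hDev : ∀ᶠ θ in nhds (0:ℝ), D θ ≠ 0 := hDt.eventually_ne hD0ne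
  have hgev : ∀ᶠ θ in nhds (0:ℝ), g θ ≠ 0 := by
    filter_upwards [hDev, hNt.eventually_ne hN0ne] with θ h1 h2
    rw [hgdef]; exact div_ne_zero h2 h1
  obtain ⟨w, hwdef⟩ : ∃ f : ℝ → ℂ, f = fun θ : ℝ => g θ * Complex.exp (P θ) := ⟨_, rfl⟩
  have hwt : Tendsto w (nhds 0) (nhds 1) := by
    rw [hwdef]
    have h2 : Tendsto (fun θ : ℝ => Complex.exp (P θ)) (nhds 0) (nhds 1) := by
      have := (Complex.continuous_exp.tendsto 0).comp hPt
      simpa [Complex.exp_zero, Function.comp_def] using this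
    simpa using hgt.mul h2
  have h1slit : (1:ℂ) ∈ Complex.slitPlane := by
    simp [Complex.mem_slitPlane_iff]
  have hLt : Tendsto (fun θ : ℝ => Complex.log (g θ) + P θ) (nhds 0) (nhds 0) := by
    have hlog : Tendsto (fun θ : ℝ => Complex.log (g θ)) (nhds 0) (nhds 0) := by
      have := ((continuousAt_clog h1slit).tendsto).comp hgt
      simpa [Complex.log_one, Function.comp_def] using this
    simpa using hlog.add hPt
  have hImt : Tendsto (fun θ : ℝ => (Complex.log (g θ) + P θ).im) (nhds 0) (nhds 0) := by
    have := (Complex.continuous_im.tendsto 0).comp hLt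
    simpa [Function.comp_def] using this
  have hIm : ∀ᶠ θ in nhds (0:ℝ), (Complex.log (g θ) + P θ).im ∈ Set.Ioo (-Real.pi) Real.pi :=
    hImt (Ioo_mem_nhds (neg_lt_zero.mpr Real.pi_pos) Real.pi_pos)
  have hEq : (fun θ : ℝ => -Complex.log (g θ) - P θ)
      =ᶠ[nhds 0] (fun θ : ℝ => -Complex.log (w θ)) := by
    filter_upwards [hgev, hIm] with θ hg0 him
    have e1 : Complex.exp (Complex.log (g θ) + P θ) = w θ := by
      rw [hwdef, Complex.exp_add, Complex.exp_log hg0]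
    have e2 : Complex.log (w θ) = Complex.log (g θ) + P θ := by
      rw [← e1, Complex.log_exp him.1 (le_of_lt him.2)]
    rw [e2]; ring
  have hlogO : (fun z : ℂ => Complex.log z) =O[nhds 1] fun z : ℂ => z - 1 := by
    have h := (Complex.hasDerivAt_log h1slit).isBigO_sub
    simpa [Complex.log_one] using h
  have hcomp : (fun θ : ℝ => Complex.log (w θ)) =O[nhds 0] fun θ : ℝ => w θ - 1 :=
    hlogO.comp_tendsto hwt
  have hMD : (fun θ : ℝ => w θ - 1) =ᶠ[nhds 0] fun θ : ℝ => M θ * (D θ)⁻¹ := by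
    filter_upwards [hDev] with θ h1
    rw [hwdef, hgdef, hMdef, hQdef]
    field_simp
    all_goals ring
  have hDinv : (fun θ : ℝ => (D θ)⁻¹) =O[nhds 0] fun _ : ℝ => (1:ℝ) :=
    (hDt.inv₀ hD0ne).isBigO_one ℝ
  have hE : (fun θ : ℝ => w θ - 1) =O[nhds 0] fun θ : ℝ => θ ^ 3 := by
    have h := hMO.mul hDinv
    refine h.congr' hMD.symm ?_
    filter_upwards with θ; simp
  have hfinal : (fun θ : ℝ => -Complex.log (g θ) - P θ) =O[nhds 0] fun θ : ℝ => θ ^ 3 :=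
    ((hcomp.trans hE).neg_left).congr' hEq.symm EventuallyEq.rfl
  refine hfinal.congr' (Filter.Eventually.of_forall fun θ => ?_) EventuallyEq.rfl
  rw [hgdef, hPdef, hNdef, hDdef, ha_def, hb_def]
end

section
/- Let η ∈ (0,1), w = 2/(2 + η(3+η)), r > 0, γ = (1 − wr)/(1 + wr), β = (1 − γ + η)/(2 + η), λ = 1 − γ − β, α = √(γ + βλ) (assume γ + βλ ≥ 0). Then α/(1 − β) = √(1 + η). -/
theorem stmt_17 (η : ℝ) (hη : 0 < η) (hη1 : η < 1) (r : ℝ) (hr : 0 < r)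
    (w γ β lam α : ℝ)
    (hw : w = 2 / (2 + η * (3 + η)))
    (hγ : γ = (1 - w * r) / (1 + w * r))
    (hβ : β = (1 - γ + η) / (2 + η))
    (hlam : lam = 1 - γ - β)
    (hpos : 0 ≤ γ + β * lam)
    (hα : α = Real.sqrt (γ + β * lam)) :
    α / (1 - β) = Real.sqrt (1 + η) := by
  have hd : (0:ℝ) < 2 + η * (3 + η) := by nlinarith
  have hwpos : 0 < w := by rw [hw]; positivity
  have hwr : 0 < 1 + w * r := by nlinarith [mul_pos hwpos hr]
  have hγ1 : -1 < γ := by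
    rw [hγ, neg_lt, ← neg_div, div_lt_one hwr]
    nlinarith [mul_pos hwpos hr]
  have hs : (0:ℝ) < 2 + η := by linarith
  have h1β : 1 - β = (1 + γ) / (2 + η) := by
    rw [hβ]; field_simp; linarith
  have h1γ : 0 < 1 + γ := by linarith
  have h1βpos : 0 < 1 - β := by
    rw [h1β]; positivity
  have key : γ + β * lam = (1 + η) * (1 - β) ^ 2 := by
    rw [hlam, hβ]
    field_simp
    ring
  rw [hα, key, h1β]
  rw [Real.sqrt_mul (by linarith)]
  rw [Real.sqrt_sq (by rw [h1β] at h1βpos; linarith)]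
  rw [mul_div_assoc, div_self (by positivity), mul_one]
end
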